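/- There exists a constant c > 0 such that for every finite group G of order n admitting a transitive action on a finite set of size m with m > 1, one has α(G) ≥ c·n/m^{1/2}; equivalently β(G) ≥ c·m^{−1/2}. -/

import Mathlib

open Finset

/-- A subset `S` of a group is product-free if there are no `a, b, c ∈ S`
(not necessarily distinct) with `a * b = c`. -/
def IsProductFree {G : Type*} [Group G] (S : Finset G) : Prop :=
  ∀ a ∈ S, ∀ b ∈ S, ∀ c ∈ S, a * b ≠ c

/-- `α(G)`: the largest cardinality of a product-free subset of `G`. -/
noncomputable def alphaPF (G : Type*) [Group G] [Fintype G] : ℕ :=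
  sSup {k | ∃ S : Finset G, IsProductFree S ∧ S.card = k}

noncomputable def wgt {α : Type*} [DecidableEq α] (p : ℝ) (Z T : Finset α) : ℝ :=
  p ^ T.card * (1 - p) ^ (Z \ T).card

lemma wgt_sum {α : Type*} [DecidableEq α] (p : ℝ) (Z : Finset α) :
    ∑ U ∈ Z.powerset, wgt p Z U = 1 := by
  have h := Finset.prod_add (fun _ : α => p) (fun _ : α => (1 - p)) Z
  simp only [add_sub_cancel, prod_const, one_pow] at h
  simpa [wgt] using h.symm

lemma wgt_nonneg {α : Type*} [DecidableEq α] {p : ℝ} (h0 : 0 ≤ p) (h1 : p ≤ 1)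
    (Z T : Finset α) : 0 ≤ wgt p Z T := by
  have : (0:ℝ) ≤ 1 - p := by linarith
  exact mul_nonneg (pow_nonneg h0 _) (pow_nonneg this _)

lemma wgt_superset {α : Type*} [DecidableEq α] (p : ℝ) (Z A : Finset α) (hA : A ⊆ Z) :
    ∑ T ∈ Z.powerset.filter (fun T => A ⊆ T), wgt p Z T = p ^ A.card := by
  have key : ∑ T ∈ Z.powerset.filter (fun T => A ⊆ T), wgt p Z T
      = ∑ U ∈ (Z \ A).powerset, wgt p Z (A ∪ U) := by
    refine Finset.sum_bij' (fun T _ => T \ A) (fun U _ => A ∪ U) ?_ ?_ ?_ ?_ ?_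
    · intro T hT
      simp only [mem_filter, mem_powerset] at hT
      exact mem_powerset.mpr (sdiff_subset_sdiff hT.1 (Finset.Subset.refl _))
    · intro U hU
      simp only [mem_powerset] at hU
      refine mem_filter.mpr ⟨mem_powerset.mpr ?_, subset_union_left⟩
      exact union_subset hA (hU.trans sdiff_subset)
    · intro T hT
      simp only [mem_filter, mem_powerset] at hT
      show A ∪ T \ A = T
      exact union_sdiff_of_subset hT.2
    · intro U hU
      simp only [mem_powerset] at hU
      show (A ∪ U) \ A = U
      rw [union_sdiff_cancel_left (disjoint_of_subset_right hU disjoint_sdiff)]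
    · intro T hT
      have h : A ∪ T \ A = T := union_sdiff_of_subset (mem_filter.mp hT).2
      rw [h]
  rw [key]
  have hval : ∀ U ∈ (Z \ A).powerset, wgt p Z (A ∪ U)
      = p ^ A.card * wgt p (Z \ A) U := by
    intro U hU
    simp only [mem_powerset] at hU
    have hdisj : Disjoint A U := disjoint_of_subset_right hU disjoint_sdiff
    have h1 : (A ∪ U).card = A.card + U.card := card_union_of_disjoint hdisj
    have h2 : Z \ (A ∪ U) = (Z \ A) \ U := by ext x; simp; tauto
    simp only [wgt, h1, h2, pow_add]
    ring
  rw [Finset.sum_congr rfl hval, ← Finset.mul_sum, wgt_sum, mul_one]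

lemma sum_biUnion_le_aux {ι β : Type*} [DecidableEq β] (s : Finset ι) (t : ι → Finset β)
    (f : β → ℝ) (hf : ∀ b, 0 ≤ f b) :
    ∑ b ∈ s.biUnion t, f b ≤ ∑ i ∈ s, ∑ b ∈ t i, f b := by
  classical
  refine Finset.induction_on s (by simp) ?_
  intro a s' ha ih
  rw [Finset.biUnion_insert, Finset.sum_insert ha]
  calc ∑ b ∈ t a ∪ s'.biUnion t, f b
      ≤ ∑ b ∈ t a, f b + ∑ b ∈ s'.biUnion t, f b := by
        have h1 := Finset.sum_union_inter (s₁ := t a) (s₂ := s'.biUnion t) (f := f)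
        have h2 : 0 ≤ ∑ b ∈ t a ∩ s'.biUnion t, f b := Finset.sum_nonneg fun b _ => hf b
        linarith
    _ ≤ ∑ b ∈ t a, f b + ∑ i ∈ s', ∑ b ∈ t i, f b := by linarith [ih]

set_option maxHeartbeats 1000000 in
theorem key (G : Type) [Group G] [Fintype G] (X : Type) [Fintype X] [MulAction G X]
    (hpre : MulAction.IsPretransitive G X) (hm : 1 < Fintype.card X) :
    (1/64 : ℝ) * Fintype.card G / Real.sqrt (Fintype.card X) ≤ (alphaPF G : ℝ) := by
  classical
  obtain ⟨x₀⟩ : Nonempty X := Fintype.card_pos_iff.mp (by omega)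
  set n := Fintype.card G with hn
  set m := Fintype.card X with hmdef
  set Y : Finset X := Finset.univ.erase x₀ with hY
  set s : ℝ := Real.sqrt m with hs
  have hm2 : (2:ℝ) ≤ m := by exact_mod_cast hm
  have hs0 : 0 < s := Real.sqrt_pos.mpr (by linarith)
  have hssq : s * s = m := Real.mul_self_sqrt (by linarith)
  have h43 : (4/3 : ℝ) ≤ s := by nlinarith
  set p : ℝ := 1 / (4 * s) with hp
  have hp0 : 0 < p := by positivity
  have hp1 : p ≤ 1 := by
    rw [hp, div_le_one (by positivity)]
    linarith
  set Sf : Finset X → Finset G :=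
    fun T => Finset.univ.filter (fun g => g • x₀ ∈ T ∧ ∀ t ∈ T, g • t ∉ T) with hSf
  have hPF : ∀ T, IsProductFree (Sf T) := by
    intro T a ha b hb c hc habc
    simp only [hSf, mem_filter, mem_univ, true_and] at ha hb hc
    have h1 : (a*b) • x₀ = a • (b • x₀) := mul_smul a b x₀
    have h2 : a • (b • x₀) ∉ T := ha.2 _ hb.1
    rw [habc] at h1
    exact h2 (h1 ▸ hc.1)
  have halpha : ∀ S : Finset G, IsProductFree S → (S.card : ℝ) ≤ (alphaPF G : ℝ) := by
    intro S hS
    have hb : BddAbove {k | ∃ S : Finset G, IsProductFree S ∧ S.card = k} := by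
      refine ⟨Fintype.card G, ?_⟩
      rintro k ⟨S, -, rfl⟩
      exact S.card_le_univ
    exact_mod_cast Nat.cast_le.mpr (le_csSup hb ⟨S, hS, rfl⟩)
  set P := Y.powerset with hP
  set F : G → ℕ := fun g => (Y.filter (fun t => g • t = t)).card with hF
  -- per-element bound
  have hper : ∀ g : G, g • x₀ ≠ x₀ →
      p - (((F g : ℝ) + 1) * p^2 + (Y.card : ℝ) * p^3)
        ≤ ∑ T ∈ P.filter (fun T => g ∈ Sf T), wgt p Y T := by
    intro g hg
    have hgxY : g • x₀ ∈ Y := Finset.mem_erase.mpr ⟨hg, mem_univ _⟩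
    have hgood_sub : P.filter (fun T => g ∈ Sf T)
        ⊆ P.filter (fun T => ({g • x₀} : Finset X) ⊆ T) := by
      intro T hT
      simp only [mem_filter, hSf, mem_univ, true_and, singleton_subset_iff] at hT ⊢
      exact ⟨hT.1, hT.2.1⟩
    have hE : ∑ T ∈ P.filter (fun T => ({g • x₀} : Finset X) ⊆ T), wgt p Y T = p := by
      rw [hP, wgt_superset p Y _ (Finset.singleton_subset_iff.mpr hgxY),
        Finset.card_singleton, pow_one]
    have hsplit := Finset.sum_sdiff (f := wgt p Y) hgood_sub
    set Bad := (P.filter (fun T => ({g • x₀}:Finset X) ⊆ T))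
        \ (P.filter (fun T => g ∈ Sf T)) with hBad
    set C : X → Finset (Finset X) :=
      fun t => P.filter (fun T => insert t (insert (g • t) ({g • x₀} : Finset X)) ⊆ T) with hC
    have hbadsub : Bad ⊆ Y.biUnion C := by
      intro T hT
      simp only [hBad, mem_sdiff, mem_filter, singleton_subset_iff, hSf, mem_univ,
        true_and] at hT
      obtain ⟨⟨hTP, hgxT⟩, hbad2⟩ := hT
      push_neg at hbad2
      obtain ⟨t, htT, hgtT⟩ := hbad2 hTP hgxT
      have hTY : T ⊆ Y := Finset.mem_powerset.mp hTP
      refine Finset.mem_biUnion.mpr ⟨t, hTY htT, ?_⟩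
      simp only [hC, mem_filter]
      refine ⟨hTP, ?_⟩
      simp [Finset.insert_subset_iff, htT, hgtT, hgxT]
    have hperT : ∀ t ∈ Y, ∑ T ∈ C t, wgt p Y T
        ≤ (if g • t = t ∨ t = g • x₀ then p^2 else p^3) := by
      intro t htY
      by_cases hgtY : g • t ∈ Y
      · have hAY : insert t (insert (g • t) ({g • x₀} : Finset X)) ⊆ Y := by
          simp [Finset.insert_subset_iff, htY, hgtY, hgxY]
        have hCsum : ∑ T ∈ C t, wgt p Y T = p ^ (insert t (insert (g • t) ({g • x₀} : Finset X))).card := by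
          rw [hC, hP]
          exact wgt_superset p Y _ hAY
        rw [hCsum]
        by_cases hcase : g • t = t ∨ t = g • x₀
        · rw [if_pos hcase]
          have h2 : 1 < (insert t (insert (g • t) ({g • x₀} : Finset X))).card := by
            rcases hcase with h1 | h1
            · have hne : t ≠ g • x₀ := by
                intro he
                rw [he] at h1
                exact hg (smul_left_cancel_iff g |>.mp h1)
              exact Finset.one_lt_card.mpr ⟨t, by simp, g • x₀, by simp, hne⟩
            · have hne : t ≠ g • t := by
                intro he
                rw [h1] at he
                exact hg (smul_left_cancel_iff g |>.mp he.symm)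
              exact Finset.one_lt_card.mpr ⟨t, by simp, g • t, by simp, hne⟩
          exact pow_le_pow_of_le_one hp0.le hp1 h2
        · rw [if_neg hcase]
          push_neg at hcase
          obtain ⟨h1, h2⟩ := hcase
          have h3 : g • t ≠ g • x₀ := by
            intro he
            exact (Finset.mem_erase.mp htY).1 (smul_left_cancel_iff g |>.mp he)
          have hcard : (insert t (insert (g • t) ({g • x₀} : Finset X))).card = 3 := by
            rw [Finset.card_insert_of_notMem (by simp [Ne.symm h1, h2]),
              Finset.card_insert_of_notMem (by simp [h3]), Finset.card_singleton]
          rw [hcard]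
      · have hempty : C t = ∅ := by
          rw [hC]
          refine Finset.eq_empty_iff_forall_notMem.mpr fun T hT => ?_
          simp only [mem_filter, hP, Finset.mem_powerset, Finset.insert_subset_iff] at hT
          exact hgtY (hT.1 hT.2.2.1)
        rw [hempty, Finset.sum_empty]
        split_ifs <;> positivity
    have hbadle : ∑ T ∈ Bad, wgt p Y T ≤ ((F g:ℝ)+1) * p^2 + (Y.card:ℝ) * p^3 := by
      have c1 : ((Y.filter (fun t => g • t = t ∨ t = g • x₀)).card : ℝ) ≤ (F g : ℝ) + 1 := by
        have hsub2 : Y.filter (fun t => g • t = t ∨ t = g • x₀)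
            ⊆ Y.filter (fun t => g • t = t) ∪ {g • x₀} := by
          intro t ht
          simp only [mem_filter, Finset.mem_union, Finset.mem_singleton] at ht ⊢
          tauto
        have := le_trans (card_le_card hsub2) (Finset.card_union_le _ _)
        rw [Finset.card_singleton] at this
        exact_mod_cast this
      have c2 : ((Y.filter (fun t => ¬(g • t = t ∨ t = g • x₀))).card : ℝ) ≤ (Y.card : ℝ) := by
        exact_mod_cast Finset.card_filter_le _ _
      calc ∑ T ∈ Bad, wgt p Y T
          ≤ ∑ T ∈ Y.biUnion C, wgt p Y T :=
            Finset.sum_le_sum_of_subset_of_nonneg hbadsub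
              (fun T _ _ => wgt_nonneg hp0.le hp1 _ _)
        _ ≤ ∑ t ∈ Y, ∑ T ∈ C t, wgt p Y T :=
            sum_biUnion_le_aux _ _ _ (fun T => wgt_nonneg hp0.le hp1 _ _)
        _ ≤ ∑ t ∈ Y, (if g • t = t ∨ t = g • x₀ then p^2 else p^3) :=
            Finset.sum_le_sum hperT
        _ = ((Y.filter (fun t => g • t = t ∨ t = g • x₀)).card : ℝ) * p^2
            + ((Y.filter (fun t => ¬(g • t = t ∨ t = g • x₀))).card : ℝ) * p^3 := by
            rw [Finset.sum_ite, Finset.sum_const, Finset.sum_const, nsmul_eq_mul, nsmul_eq_mul]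
        _ ≤ ((F g:ℝ)+1) * p^2 + (Y.card:ℝ) * p^3 := by
            have := mul_le_mul_of_nonneg_right c1 (by positivity : (0:ℝ) ≤ p^2)
            have := mul_le_mul_of_nonneg_right c2 (by positivity : (0:ℝ) ≤ p^3)
            linarith
    linarith [hsplit, hE, hbadle]
  -- Burnside
  have hburn : ∑ g : G, (F g : ℝ) ≤ (n : ℝ) := by
    have h1 : ∀ g : G, F g ≤ Fintype.card (MulAction.fixedBy X g) := by
      intro g
      have hsub : (Y.filter (fun t => g • t = t)).card
          ≤ (Finset.univ.filter (fun t : X => g • t = t)).card :=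
        card_le_card (Finset.filter_subset_filter _ (subset_univ Y))
      have hcard : (Finset.univ.filter (fun t : X => g • t = t)).card
          = Fintype.card (MulAction.fixedBy X g) := by
        rw [← Fintype.card_subtype]
        exact Fintype.card_congr (Equiv.subtypeEquivRight fun t =>
          (MulAction.mem_fixedBy).symm)
      rw [hF, ← hcard]
      exact hsub
    have h3 : Fintype.card (Quotient (MulAction.orbitRel G X)) = 1 := by
      rw [Fintype.card_eq_one_iff]
      refine ⟨Quotient.mk _ x₀, fun q => ?_⟩
      induction q using Quotient.inductionOn with
      | h x =>
        obtain ⟨g, hg⟩ := hpre.exists_smul_eq x₀ x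
        exact Quotient.sound (MulAction.orbitRel_apply.mpr ⟨g, hg⟩)
    have h2 := MulAction.sum_card_fixedBy_eq_card_orbits_mul_card_group G X
    rw [h3, one_mul] at h2
    calc ∑ g : G, (F g : ℝ) ≤ ∑ g : G, (Fintype.card (MulAction.fixedBy X g) : ℝ) :=
        Finset.sum_le_sum fun g _ => by exact_mod_cast h1 g
      _ = (n : ℝ) := by rw [← Nat.cast_sum, h2]
  -- stabilizer size
  have hstab : ((Finset.univ.filter (fun g : G => g • x₀ = x₀)).card : ℝ) * m = n := by
    have horb : Fintype.card (MulAction.orbit G x₀) = m := by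
      have h1 : ∀ x : X, x ∈ MulAction.orbit G x₀ := fun x => by
        rw [MulAction.orbit_eq_univ]; trivial
      rw [hmdef]
      exact Fintype.card_congr (Equiv.subtypeUnivEquiv h1)
    have hstabcard : Fintype.card (MulAction.stabilizer G x₀)
        = (Finset.univ.filter (fun g : G => g • x₀ = x₀)).card := by
      rw [← Fintype.card_subtype]
      exact Fintype.card_congr (Equiv.subtypeEquivRight fun g => MulAction.mem_stabilizer_iff)
    have hos := MulAction.card_orbit_mul_card_stabilizer_eq_card_group G x₀
    rw [horb, hstabcard] at hos
    have : (m * (Finset.univ.filter (fun g : G => g • x₀ = x₀)).card : ℝ) = n := by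
      exact_mod_cast congrArg (Nat.cast : ℕ → ℝ) hos
    linarith [this]
  -- total lower bound
  have htotal : (n:ℝ)/2 * p - 2*n*p^2 - n*m*p^3
      ≤ ∑ T ∈ P, wgt p Y T * ((Sf T).card : ℝ) := by
    have hswap : ∑ T ∈ P, wgt p Y T * ((Sf T).card : ℝ)
        = ∑ g : G, ∑ T ∈ P.filter (fun T => g ∈ Sf T), wgt p Y T := by
      have h1 : ∀ T, wgt p Y T * ((Sf T).card : ℝ)
          = ∑ g : G, (if g ∈ Sf T then wgt p Y T else 0) := by
        intro T
        rw [Finset.sum_ite_mem, Finset.univ_inter, Finset.sum_const, nsmul_eq_mul, mul_comm]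
      rw [Finset.sum_congr rfl (fun T _ => h1 T), Finset.sum_comm]
      refine Finset.sum_congr rfl fun g _ => ?_
      rw [Finset.sum_filter]
    rw [hswap]
    set D := Finset.univ.filter (fun g : G => g • x₀ ≠ x₀) with hD
    have hinner_nonneg : ∀ g : G, 0 ≤ ∑ T ∈ P.filter (fun T => g ∈ Sf T), wgt p Y T :=
      fun g => Finset.sum_nonneg fun T _ => wgt_nonneg hp0.le hp1 _ _
    have hdrop : ∑ g ∈ D, (∑ T ∈ P.filter (fun T => g ∈ Sf T), wgt p Y T)
        ≤ ∑ g : G, ∑ T ∈ P.filter (fun T => g ∈ Sf T), wgt p Y T :=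
      Finset.sum_le_sum_of_subset_of_nonneg (Finset.filter_subset _ _)
        (fun g _ _ => hinner_nonneg g)
    have hlow : ∑ g ∈ D, (p - (((F g:ℝ)+1)*p^2 + (Y.card:ℝ)*p^3))
        ≤ ∑ g ∈ D, (∑ T ∈ P.filter (fun T => g ∈ Sf T), wgt p Y T) :=
      Finset.sum_le_sum fun g hg => hper g (by
        simpa [hD] using (Finset.mem_filter.mp hg).2)
    have hexp : ∑ g ∈ D, (p - (((F g:ℝ)+1)*p^2 + (Y.card:ℝ)*p^3))
        = (D.card : ℝ) * p - (∑ g ∈ D, (F g:ℝ))*p^2 - (D.card:ℝ) * p^2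
          - (D.card:ℝ) * (Y.card:ℝ) * p^3 := by
      rw [Finset.sum_sub_distrib, Finset.sum_const, nsmul_eq_mul, Finset.sum_add_distrib,
        Finset.sum_const, nsmul_eq_mul, ← Finset.sum_mul, Finset.sum_add_distrib,
        Finset.sum_const, nsmul_eq_mul]
      ring
    have hDcard_le : (D.card : ℝ) ≤ n := by
      exact_mod_cast Nat.cast_le.mpr (le_trans (Finset.card_filter_le _ _) (le_of_eq Finset.card_univ))
    have hDsum : ((Finset.univ.filter (fun g : G => g • x₀ = x₀)).card : ℝ) + (D.card : ℝ)
        = n := by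
      have := Finset.card_filter_add_card_filter_not
        (s := (Finset.univ : Finset G)) (p := fun g => g • x₀ = x₀)
      have h2 : (Finset.univ.filter (fun g : G => g • x₀ = x₀)).card + D.card = n := by
        rw [hD]
        simp only [ne_eq]
        rw [this, Finset.card_univ]
      exact_mod_cast h2
    have hDcard_ge : (n:ℝ)/2 ≤ (D.card : ℝ) := by nlinarith
    have hFsum : ∑ g ∈ D, (F g:ℝ) ≤ (n:ℝ) := by
      refine le_trans ?_ hburn
      exact Finset.sum_le_sum_of_subset_of_nonneg (Finset.filter_subset _ _)
        (fun g _ _ => by positivity)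
    have hFsum_nonneg : 0 ≤ ∑ g ∈ D, (F g:ℝ) := Finset.sum_nonneg fun g _ => by positivity
    have hYm : (Y.card : ℝ) ≤ m := by
      exact_mod_cast Nat.cast_le.mpr (le_trans (Finset.card_le_univ Y) (le_of_eq Finset.card_univ))
    have hYnonneg : (0:ℝ) ≤ Y.card := Nat.cast_nonneg _
    have e1 : (n:ℝ)/2 * p ≤ (D.card:ℝ) * p := mul_le_mul_of_nonneg_right hDcard_ge hp0.le
    have e2 : (∑ g ∈ D, (F g:ℝ)) * p^2 ≤ (n:ℝ) * p^2 :=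
      mul_le_mul_of_nonneg_right hFsum (by positivity)
    have e3 : (D.card:ℝ) * p^2 ≤ (n:ℝ) * p^2 :=
      mul_le_mul_of_nonneg_right hDcard_le (by positivity)
    have e4 : (D.card:ℝ) * (Y.card:ℝ) * p^3 ≤ (n:ℝ) * (m:ℝ) * p^3 := by
      refine mul_le_mul_of_nonneg_right ?_ (by positivity)
      exact mul_le_mul hDcard_le hYm hYnonneg (Nat.cast_nonneg n)
    calc (n:ℝ)/2 * p - 2*n*p^2 - n*m*p^3
        ≤ (D.card : ℝ) * p - (∑ g ∈ D, (F g:ℝ))*p^2 - (D.card:ℝ) * p^2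
          - (D.card:ℝ) * (Y.card:ℝ) * p^3 := by linarith
      _ = ∑ g ∈ D, (p - (((F g:ℝ)+1)*p^2 + (Y.card:ℝ)*p^3)) := hexp.symm
      _ ≤ ∑ g ∈ D, (∑ T ∈ P.filter (fun T => g ∈ Sf T), wgt p Y T) := hlow
      _ ≤ ∑ g : G, ∑ T ∈ P.filter (fun T => g ∈ Sf T), wgt p Y T := hdrop
  -- averaging
  obtain ⟨T₀, hT₀, hmax⟩ := P.exists_max_image (fun T => ((Sf T).card : ℝ))
    ⟨∅, mem_powerset.mpr (empty_subset _)⟩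
  have havg : (n:ℝ)/2 * p - 2*n*p^2 - n*m*p^3 ≤ ((Sf T₀).card : ℝ) := by
    calc (n:ℝ)/2 * p - 2*n*p^2 - n*m*p^3 ≤ ∑ T ∈ P, wgt p Y T * ((Sf T).card : ℝ) := htotal
      _ ≤ ∑ T ∈ P, wgt p Y T * ((Sf T₀).card : ℝ) := by
          refine Finset.sum_le_sum fun T hT => ?_
          exact mul_le_mul_of_nonneg_left (hmax T hT) (wgt_nonneg hp0.le hp1 _ _)
      _ = ((Sf T₀).card : ℝ) := by rw [← Finset.sum_mul, wgt_sum, one_mul]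
  -- final numeric computation
  have hfinal : (1/64 : ℝ) * n / s ≤ (n:ℝ)/2 * p - 2*n*p^2 - n*m*p^3 := by
    have hn0 : (0:ℝ) ≤ n := Nat.cast_nonneg n
    have hmval : (m:ℝ) = s * s := hssq.symm
    rw [hmval, hp]
    have hs0' : s ≠ 0 := ne_of_gt hs0
    field_simp
    ring_nf
    nlinarith [mul_nonneg (mul_nonneg hn0 (pow_nonneg hs0.le 5)) (sub_nonneg.mpr h43), mul_nonneg hn0 (sub_nonneg.mpr h43)]
  calc (1/64 : ℝ) * n / s ≤ (n:ℝ)/2 * p - 2*n*p^2 - n*m*p^3 := hfinal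
    _ ≤ ((Sf T₀).card : ℝ) := havg
    _ ≤ (alphaPF G : ℝ) := halpha _ (hPF T₀)

theorem alpha_lower_bound_sqrt :
    ∃ c : ℝ, 0 < c ∧
      ∀ (G : Type) [Group G] [Fintype G] (X : Type) [Fintype X] [MulAction G X],
        MulAction.IsPretransitive G X → 1 < Fintype.card X →
        c * Fintype.card G / Real.sqrt (Fintype.card X) ≤ (alphaPF G : ℝ) := by
  exact ⟨1/64, by norm_num, key⟩
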